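/- Let K be a Markov kernel on a measurable space (Y,𝒴), D ∈ 𝒴, r: ℕ → (0,∞) with R(n) = Σ_{k=0}^{n−1} r(k), b ≥ 0 and M ≥ 0. Let (U_n)_{n≥0} be measurable functions U_n: Y → (0,∞) satisfying, for every n ≥ 0 and every z ∈ Y, (K U_{n+1})(z) ≤ U_n(z) − r(n) + b·r(n)·1_D(z). For the canonical chain (Z_n)_{n≥0} with kernel K started at z, define W_n = U_n(Z_n) + R(n) + M and T_n = ∏_{i=0}^{n−1} (W_i + b·r(i)·1_D(Z_i))/W_i (with T_0 = 1). Then (W_n·T_n^{-1})_{n≥0} is a supermartingale with respect to the natural filtration of (Z_n); in particular, for every n ≥ 0, E_z[W_n·T_n^{-1}] ≤ U_0(z) + M. -/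

import Mathlib

open MeasureTheory ProbabilityTheory Filter
open scoped ENNReal

noncomputable section

variable {Y : Type*} [MeasurableSpace Y]

/-- `μ` is the family of laws of the canonical Markov chain with kernel `K`. -/
structure IsMarkovChain (K : Kernel Y Y) (μ : Y → Measure (ℕ → Y)) : Prop where
  isProb : ∀ y, IsProbabilityMeasure (μ y)
  init : ∀ y, (μ y).map (fun ω => ω 0) = Measure.dirac y
  markov : ∀ (y : Y) (n : ℕ) (g : (ℕ → Y) → ℝ≥0∞) (f : Y → ℝ≥0∞),
      Measurable[MeasurableSpace.comap (fun ω (i : Fin (n + 1)) => ω i) inferInstance] g →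
      Measurable f →
      ∫⁻ ω, g ω * f (ω (n + 1)) ∂(μ y) = ∫⁻ ω, g ω * ∫⁻ z, f z ∂(K (ω n)) ∂(μ y)

/-- `W_n(ω) = U_n(Z_n) + R(n) + M`. -/
def Wfun (r : ℕ → ℝ) (M : ℝ) (U : ℕ → Y → ℝ) (n : ℕ) (ω : ℕ → Y) : ℝ :=
  U n (ω n) + (∑ k ∈ Finset.range n, r k) + M

/-- `T_n(ω) = ∏_{i=0}^{n-1} (W_i + b·r(i)·1_D(Z_i))/W_i` (so `T_0 = 1`). -/
def Tfun (D : Set Y) (r : ℕ → ℝ) (b M : ℝ) (U : ℕ → Y → ℝ) (n : ℕ) (ω : ℕ → Y) : ℝ :=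
  ∏ i ∈ Finset.range n,
    (Wfun r M U i ω + b * r i * D.indicator (fun _ => 1) (ω i)) / Wfun r M U i ω

/-- under the sequential drift condition
`K U_{n+1} ≤ U_n - r(n) + b·r(n)·1_D`, the process `W_n/T_n` is a supermartingale for
the natural filtration (formulated here by testing against nonnegative functions of the
past), and in particular `E_z[W_n/T_n] ≤ U_0(z) + M` for every `n`. -/
theorem stmt17 (K : Kernel Y Y) [IsMarkovKernel K] (D : Set Y) (hD : MeasurableSet D)
    (r : ℕ → ℝ) (hr : ∀ n, 0 < r n) (b M : ℝ) (hb : 0 ≤ b) (hM : 0 ≤ M)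
    (U : ℕ → Y → ℝ) (hUmeas : ∀ n, Measurable (U n)) (hUpos : ∀ n z, 0 < U n z)
    (hdrift : ∀ (n : ℕ) (z : Y),
      ∫⁻ w, ENNReal.ofReal (U (n + 1) w) ∂(K z) ≤
        ENNReal.ofReal (U n z - r n + b * r n * D.indicator (fun _ => 1) z))
    (μ : Y → Measure (ℕ → Y)) (hμ : IsMarkovChain K μ) (z : Y) :
    -- supermartingale property of W_n / T_n
    (∀ n : ℕ, ∀ g : (ℕ → Y) → ℝ≥0∞,
      Measurable[MeasurableSpace.comap (fun ω (i : Fin (n + 1)) => ω i) inferInstance] g →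
      ∫⁻ ω, g ω * ENNReal.ofReal (Wfun r M U (n + 1) ω / Tfun D r b M U (n + 1) ω) ∂(μ z) ≤
      ∫⁻ ω, g ω * ENNReal.ofReal (Wfun r M U n ω / Tfun D r b M U n ω) ∂(μ z)) ∧
    -- in particular E_z[W_n / T_n] ≤ U_0(z) + M
    (∀ n : ℕ,
      ∫⁻ ω, ENNReal.ofReal (Wfun r M U n ω / Tfun D r b M U n ω) ∂(μ z) ≤
        ENNReal.ofReal (U 0 z + M)) := by
    -- nonnegativity of the indicator-correction term
  have hind_nonneg : ∀ y : Y, (0:ℝ) ≤ D.indicator (fun _ => 1) y := fun y =>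
    Set.indicator_nonneg (fun _ _ => zero_le_one) y
  have hs_nonneg : ∀ (n : ℕ) (y : Y), 0 ≤ b * r n * D.indicator (fun _ => 1) y := fun n y =>
    mul_nonneg (mul_nonneg hb (hr n).le) (hind_nonneg y)
  -- positivity of W
  have hWpos : ∀ (n : ℕ) (ω : ℕ → Y), 0 < Wfun r M U n ω := by
    intro n ω
    have h1 : 0 ≤ ∑ k ∈ Finset.range n, r k := Finset.sum_nonneg fun k _ => (hr k).le
    have h2 := hUpos n (ω n)
    unfold Wfun
    linarith
  -- T ≥ 1
  have hTpos1 : ∀ (n : ℕ) (ω : ℕ → Y), 1 ≤ Tfun D r b M U n ω := by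
    intro n ω
    induction n with
    | zero => simp [Tfun]
    | succ m ih =>
      have hfac : 1 ≤ (Wfun r M U m ω + b * r m * D.indicator (fun _ => 1) (ω m)) /
          Wfun r M U m ω := by
        rw [le_div_iff₀ (hWpos m ω)]
        have := hs_nonneg m (ω m)
        linarith
      have hstep : Tfun D r b M U (m + 1) ω
          = Tfun D r b M U m ω *
            ((Wfun r M U m ω + b * r m * D.indicator (fun _ => 1) (ω m)) / Wfun r M U m ω) := by
        simp only [Tfun, Finset.prod_range_succ]
      rw [hstep]
      calc (1:ℝ) = 1 * 1 := by ring
        _ ≤ _ := mul_le_mul ih hfac zero_le_one (zero_le_one.trans ih)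
  have hTpos : ∀ (n : ℕ) (ω : ℕ → Y), 0 < Tfun D r b M U n ω := fun n ω =>
    lt_of_lt_of_le zero_lt_one (hTpos1 n ω)
  -- the drift bound has nonnegative right-hand side
  have ha : ∀ (n : ℕ) (y : Y), 0 ≤ U n y - r n + b * r n * D.indicator (fun _ => 1) y := by
    intro n y
    by_contra h
    push_neg at h
    have h0 : ENNReal.ofReal (U n y - r n + b * r n * D.indicator (fun _ => 1) y) = 0 :=
      ENNReal.ofReal_eq_zero.mpr h.le
    have hint : ∫⁻ w, ENNReal.ofReal (U (n + 1) w) ∂(K y) = 0 :=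
      le_antisymm (h0 ▸ hdrift n y) zero_le
    rw [lintegral_eq_zero_iff ((hUmeas (n + 1)).ennreal_ofReal)] at hint
    rw [Filter.EventuallyEq, ae_iff] at hint
    simp only [Pi.zero_apply] at hint
    have hset : {w : Y | ¬ ENNReal.ofReal (U (n + 1) w) = 0} = Set.univ := by
      ext w
      simp only [Set.mem_setOf_eq, Set.mem_univ, iff_true, ENNReal.ofReal_eq_zero, not_le]
      exact hUpos (n + 1) w
    rw [hset] at hint
    have huniv : (K y) Set.univ = 1 := measure_univ
    rw [hint] at huniv
    exact zero_ne_one huniv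
  -- main supermartingale step
  have main : ∀ n : ℕ, ∀ g : (ℕ → Y) → ℝ≥0∞,
      Measurable[MeasurableSpace.comap (fun ω (i : Fin (n + 1)) => ω i) inferInstance] g →
      ∫⁻ ω, g ω * ENNReal.ofReal (Wfun r M U (n + 1) ω / Tfun D r b M U (n + 1) ω) ∂(μ z) ≤
      ∫⁻ ω, g ω * ENNReal.ofReal (Wfun r M U n ω / Tfun D r b M U n ω) ∂(μ z) := by
    intro n g hg
    have hproj : Measurable[MeasurableSpace.comap (fun (ω : ℕ → Y) (i : Fin (n + 1)) => ω i)
        inferInstance] (fun (ω : ℕ → Y) (i : Fin (n + 1)) => ω i) :=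
      measurable_iff_comap_le.mpr le_rfl
    have hcoord : ∀ i : ℕ, i ≤ n →
        Measurable[MeasurableSpace.comap (fun (ω : ℕ → Y) (i : Fin (n + 1)) => ω i)
          inferInstance] (fun ω : ℕ → Y => ω i) := by
      intro i hi
      exact (measurable_pi_apply (⟨i, Nat.lt_succ_of_le hi⟩ : Fin (n + 1))).comp hproj
    have hWm : ∀ i : ℕ, i ≤ n →
        Measurable[MeasurableSpace.comap (fun (ω : ℕ → Y) (i : Fin (n + 1)) => ω i)
          inferInstance] (Wfun r M U i) := by
      intro i hi
      exact (((hUmeas i).comp (hcoord i hi)).add_const _).add_const _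
    have hTm : Measurable[MeasurableSpace.comap (fun (ω : ℕ → Y) (i : Fin (n + 1)) => ω i)
        inferInstance] (Tfun D r b M U (n + 1)) := by
      unfold Tfun
      apply Finset.measurable_prod
      intro i hi
      have hi' : i ≤ n := Nat.lt_succ_iff.mp (Finset.mem_range.mp hi)
      have h1 : Measurable[MeasurableSpace.comap (fun (ω : ℕ → Y) (i : Fin (n + 1)) => ω i)
          inferInstance] (fun ω : ℕ → Y => b * r i * D.indicator (fun _ => 1) (ω i)) :=
        ((measurable_const.indicator hD).comp (hcoord i hi')).const_mul _
      exact ((hWm i hi').add h1).div (hWm i hi')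
    set g' : (ℕ → Y) → ℝ≥0∞ :=
      fun ω => g ω / ENNReal.ofReal (Tfun D r b M U (n + 1) ω) with hg'def
    have hg' : Measurable[MeasurableSpace.comap (fun (ω : ℕ → Y) (i : Fin (n + 1)) => ω i)
        inferInstance] g' := hg.div hTm.ennreal_ofReal
    set C : ℝ := (∑ k ∈ Finset.range (n + 1), r k) + M with hCdef
    have hC0 : 0 ≤ C := add_nonneg (Finset.sum_nonneg fun k _ => (hr k).le) hM
    set f : Y → ℝ≥0∞ := fun w => ENNReal.ofReal (U (n + 1) w + C) with hfdef
    have hf : Measurable f := ((hUmeas (n + 1)).add_const _).ennreal_ofReal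
    have eq1 : ∀ ω : ℕ → Y,
        g ω * ENNReal.ofReal (Wfun r M U (n + 1) ω / Tfun D r b M U (n + 1) ω)
          = g' ω * f (ω (n + 1)) := by
      intro ω
      have hW : f (ω (n + 1)) = ENNReal.ofReal (Wfun r M U (n + 1) ω) := by
        rw [hfdef]
        unfold Wfun
        rw [hCdef]
        congr 1
        ring
      rw [hW, ENNReal.ofReal_div_of_pos (hTpos (n + 1) ω), hg'def]
      simp only [div_eq_mul_inv]
      ring
    have eq2 : ∀ ω : ℕ → Y,
        g' ω * ENNReal.ofReal (Wfun r M U n ω + b * r n * D.indicator (fun _ => 1) (ω n))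
          = g ω * ENNReal.ofReal (Wfun r M U n ω / Tfun D r b M U n ω) := by
      intro ω
      have h1 : Wfun r M U n ω ≠ 0 := (hWpos n ω).ne'
      have h2 : Tfun D r b M U n ω ≠ 0 := (hTpos n ω).ne'
      have hWs : Wfun r M U n ω + b * r n * D.indicator (fun _ => 1) (ω n)
          = (Wfun r M U n ω / Tfun D r b M U n ω) * Tfun D r b M U (n + 1) ω := by
        have hstep : Tfun D r b M U (n + 1) ω = Tfun D r b M U n ω *
            ((Wfun r M U n ω + b * r n * D.indicator (fun _ => 1) (ω n)) / Wfun r M U n ω) := by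
          simp only [Tfun, Finset.prod_range_succ]
        rw [hstep]
        field_simp
      have hy0 : ENNReal.ofReal (Tfun D r b M U (n + 1) ω) ≠ 0 := by
        rw [Ne, ENNReal.ofReal_eq_zero, not_le]
        exact hTpos (n + 1) ω
      have hyt : ENNReal.ofReal (Tfun D r b M U (n + 1) ω) ≠ ⊤ := ENNReal.ofReal_ne_top
      rw [hg'def, hWs,
        ENNReal.ofReal_mul (div_nonneg (hWpos n ω).le (hTpos n ω).le)]
      calc g ω / ENNReal.ofReal (Tfun D r b M U (n + 1) ω) *
            (ENNReal.ofReal (Wfun r M U n ω / Tfun D r b M U n ω) *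
              ENNReal.ofReal (Tfun D r b M U (n + 1) ω))
          = g ω / ENNReal.ofReal (Tfun D r b M U (n + 1) ω) *
              ENNReal.ofReal (Tfun D r b M U (n + 1) ω) *
              ENNReal.ofReal (Wfun r M U n ω / Tfun D r b M U n ω) := by ring
        _ = _ := by rw [ENNReal.div_mul_cancel hy0 hyt]
    have hinner : ∀ y : Y,
        ∫⁻ w, f w ∂(K y) ≤
          ENNReal.ofReal (U n y + (∑ k ∈ Finset.range n, r k) + M +
            b * r n * D.indicator (fun _ => 1) y) := by
      intro y
      calc ∫⁻ w, f w ∂(K y)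
          = ∫⁻ w, (ENNReal.ofReal (U (n + 1) w) + ENNReal.ofReal C) ∂(K y) := by
            apply lintegral_congr
            intro w
            rw [hfdef]
            exact ENNReal.ofReal_add (hUpos (n + 1) w).le hC0
        _ = (∫⁻ w, ENNReal.ofReal (U (n + 1) w) ∂(K y)) + ENNReal.ofReal C := by
            rw [lintegral_add_right _ measurable_const, lintegral_const, measure_univ, mul_one]
        _ ≤ ENNReal.ofReal (U n y - r n + b * r n * D.indicator (fun _ => 1) y) +
              ENNReal.ofReal C := add_le_add_left (hdrift n y) _
        _ = ENNReal.ofReal (U n y - r n + b * r n * D.indicator (fun _ => 1) y + C) :=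
            (ENNReal.ofReal_add (ha n y) hC0).symm
        _ = _ := by
            congr 1
            rw [hCdef, Finset.sum_range_succ]
            ring
    calc ∫⁻ ω, g ω * ENNReal.ofReal (Wfun r M U (n + 1) ω / Tfun D r b M U (n + 1) ω) ∂(μ z)
        = ∫⁻ ω, g' ω * f (ω (n + 1)) ∂(μ z) := lintegral_congr eq1
      _ = ∫⁻ ω, g' ω * ∫⁻ w, f w ∂(K (ω n)) ∂(μ z) := hμ.markov z n g' f hg' hf
      _ ≤ ∫⁻ ω, g' ω *
            ENNReal.ofReal (Wfun r M U n ω + b * r n * D.indicator (fun _ => 1) (ω n)) ∂(μ z) := by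
          apply lintegral_mono
          intro ω
          exact mul_le_mul_right (hinner (ω n)) _
      _ = ∫⁻ ω, g ω * ENNReal.ofReal (Wfun r M U n ω / Tfun D r b M U n ω) ∂(μ z) :=
          lintegral_congr eq2
  refine ⟨main, ?_⟩
  have hI : ∀ n : ℕ,
      ∫⁻ ω, ENNReal.ofReal (Wfun r M U n ω / Tfun D r b M U n ω) ∂(μ z) ≤
      ∫⁻ ω, ENNReal.ofReal (Wfun r M U 0 ω / Tfun D r b M U 0 ω) ∂(μ z) := by
    intro n
    induction n with
    | zero => exact le_rfl
    | succ m ih =>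
      refine le_trans ?_ ih
      have h := main m (fun _ => 1) measurable_const
      simpa using h
  intro n
  refine (hI n).trans ?_
  have h0 : ∀ ω : ℕ → Y, ENNReal.ofReal (Wfun r M U 0 ω / Tfun D r b M U 0 ω)
      = ENNReal.ofReal (U 0 (ω 0) + M) := by
    intro ω
    simp [Wfun, Tfun]
  calc ∫⁻ ω, ENNReal.ofReal (Wfun r M U 0 ω / Tfun D r b M U 0 ω) ∂(μ z)
      = ∫⁻ ω, ENNReal.ofReal (U 0 (ω 0) + M) ∂(μ z) := lintegral_congr h0
    _ = ∫⁻ y, ENNReal.ofReal (U 0 y + M) ∂((μ z).map (fun ω => ω 0)) :=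
        (lintegral_map ((hUmeas 0).add_const M).ennreal_ofReal (measurable_pi_apply 0)).symm
    _ = ∫⁻ y, ENNReal.ofReal (U 0 y + M) ∂(Measure.dirac z) := by rw [hμ.init z]
    _ = ENNReal.ofReal (U 0 z + M) :=
        lintegral_dirac' z ((hUmeas 0).add_const M).ennreal_ofReal
    _ ≤ ENNReal.ofReal (U 0 z + M) := le_rfl
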